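/- Conjugacy of the possibilistic exponential family: let A : ℝ^d → ℝ, λ, t ∈ ℝ^d, ν ≥ 0, and set μ = (t + νλ)/(ν + 1). Assume A†(λ) < ∞ and A†(μ) < ∞. Then sup_{θ∈ℝ^d} exp(⟨t, θ⟩ − A(θ)) · g_λ(θ)^ν = exp((ν+1)·A†(μ) − ν·A†(λ)) ∈ (0, ∞), and for every θ ∈ ℝ^d, the normalized product exp(⟨t, θ⟩ − A(θ)) · g_λ(θ)^ν / sup_{θ'∈ℝ^d} [ exp(⟨t, θ'⟩ − A(θ')) · g_λ(θ')^ν ] equals g_μ(θ)^{ν+1}. In other words, the possibilistic posterior obtained from the prior g_λ^ν and the exponential-family likelihood with sufficient statistic t is g_{(t+νλ)/(ν+1)}^{ν+1}. -/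
import Mathlib


open scoped RealInnerProductSpace

/-- The convex conjugate `A†(λ) = sup_θ { ⟨λ, θ⟩ − A(θ) }`, valued in `(−∞, ∞]`
(encoded in the extended reals). -/
noncomputable def Adag {d : ℕ} (A : EuclideanSpace ℝ (Fin d) → ℝ)
    (l : EuclideanSpace ℝ (Fin d)) : EReal :=
  ⨆ θ, ((⟪l, θ⟫ - A θ : ℝ) : EReal)

/-- The exponential-family possibility function
`g_λ(θ) = exp(⟨λ, θ⟩ − A†(λ) − A(θ))` (for `λ` with `A†(λ) < ∞`). -/
noncomputable def gExp {d : ℕ} (A : EuclideanSpace ℝ (Fin d) → ℝ)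
    (l θ : EuclideanSpace ℝ (Fin d)) : ℝ :=
  Real.exp (⟪l, θ⟫ - (Adag A l).toReal - A θ)

/-- Conjugacy of the possibilistic exponential family: the possibilistic
posterior obtained from the prior `g_λ^ν` and the exponential-family likelihood
with sufficient statistic `t` is `g_μ^{ν+1}` with `μ = (t + νλ)/(ν+1)`, and the
normalizing supremum equals `exp((ν+1)A†(μ) − νA†(λ))`. -/
theorem expFamily_conjugacy {d : ℕ} (hd : 1 ≤ d)
    (A : EuclideanSpace ℝ (Fin d) → ℝ) (l t : EuclideanSpace ℝ (Fin d))
    (ν : ℝ) (hν : 0 ≤ ν) (μ : EuclideanSpace ℝ (Fin d))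
    (hμ : μ = (ν + 1)⁻¹ • (t + ν • l))
    (hl : Adag A l ≠ ⊤) (hμfin : Adag A μ ≠ ⊤) :
    (⨆ θ, Real.exp (⟪t, θ⟫ - A θ) * gExp A l θ ^ ν)
        = Real.exp ((ν + 1) * (Adag A μ).toReal - ν * (Adag A l).toReal) ∧
    ∀ θ, Real.exp (⟪t, θ⟫ - A θ) * gExp A l θ ^ ν
          / (⨆ θ', Real.exp (⟪t, θ'⟫ - A θ') * gExp A l θ' ^ ν)
        = gExp A μ θ ^ (ν + 1) := by
  have hν1 : (0:ℝ) < ν + 1 := by linarith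
  have hν1' : (ν + 1 : ℝ) ≠ 0 := ne_of_gt hν1
  set f : EuclideanSpace ℝ (Fin d) → ℝ := fun θ => ⟪μ, θ⟫ - A θ with hf
  have hbot : Adag A μ ≠ ⊥ := by
    intro h
    have h0 := le_iSup (fun θ => ((⟪μ, θ⟫ - A θ : ℝ) : EReal)) 0
    rw [show (⨆ θ, ((⟪μ, θ⟫ - A θ : ℝ) : EReal)) = Adag A μ from rfl, h] at h0
    exact (EReal.coe_ne_bot _) (le_bot_iff.mp h0)
  set r : ℝ := (Adag A μ).toReal with hr
  have hco : Adag A μ = (r : EReal) := (EReal.coe_toReal hμfin hbot).symm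
  have hle : ∀ θ, f θ ≤ r := by
    intro θ
    have h0 := le_iSup (fun θ => ((⟪μ, θ⟫ - A θ : ℝ) : EReal)) θ
    rw [show (⨆ θ, ((⟪μ, θ⟫ - A θ : ℝ) : EReal)) = Adag A μ from rfl, hco] at h0
    exact_mod_cast h0
  have hbdd : BddAbove (Set.range f) := ⟨r, by rintro x ⟨θ, rfl⟩; exact hle θ⟩
  have hsup : (⨆ θ, f θ) = r := by
    refine le_antisymm (ciSup_le hle) ?_
    have h2 : Adag A μ ≤ (((⨆ θ, f θ) : ℝ) : EReal) := by
      refine iSup_le fun θ => ?_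
      exact_mod_cast le_ciSup hbdd θ
    rw [hco] at h2
    exact_mod_cast h2
  set rl : ℝ := (Adag A l).toReal with hrl
  have hinner : ∀ θ : EuclideanSpace ℝ (Fin d),
      (ν+1) * ⟪μ, θ⟫ = ⟪t, θ⟫ + ν * ⟪l, θ⟫ := by
    intro θ
    rw [hμ, real_inner_smul_left, inner_add_left, real_inner_smul_left]
    field_simp
  have hpt : ∀ θ, Real.exp (⟪t, θ⟫ - A θ) * gExp A l θ ^ ν
      = Real.exp ((ν+1) * f θ - ν * rl) := by
    intro θ
    rw [gExp, ← Real.exp_mul, ← Real.exp_add]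
    congr 1
    simp only [hf]
    linear_combination -hinner θ
  set φ : ℝ → ℝ := fun x => Real.exp ((ν+1) * x - ν * rl) with hφ
  have hφmono : Monotone φ := fun a b hab => Real.exp_le_exp.mpr
    (sub_le_sub_right (mul_le_mul_of_nonneg_left hab (le_of_lt hν1)) _)
  have hφcont : Continuous φ :=
    Real.continuous_exp.comp ((continuous_const.mul continuous_id).sub continuous_const)
  have key : (⨆ θ, Real.exp (⟪t, θ⟫ - A θ) * gExp A l θ ^ ν)
      = Real.exp ((ν+1) * r - ν * rl) := by
    calc (⨆ θ, Real.exp (⟪t, θ⟫ - A θ) * gExp A l θ ^ ν)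
        = ⨆ θ, φ (f θ) := by simp only [hpt, hφ]
      _ = φ (⨆ θ, f θ) :=
          (hφmono.map_ciSup_of_continuousAt (hφcont.continuousAt) hbdd).symm
      _ = Real.exp ((ν+1) * r - ν * rl) := by rw [hsup]
  refine ⟨key, fun θ => ?_⟩
  rw [hpt θ, key, ← Real.exp_sub, gExp, ← Real.exp_mul]
  congr 1
  simp only [hf]
  ring
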